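/- Let f : ℝ^d → ℝ be locally Lipschitz and assume hypotheses (H1), (H2), (H3) of the setting. Then for every x ∈ ball(x̄, δ_A/2), every σ ∈ (0, δ_A/2], every nonzero g ∈ ∂_σ f(x), and every ĝ ∈ ∂f(x − σ·g/‖g‖): ⟨ĝ − Q_x ĝ, g⟩ ≤ −μ·‖g − Q_x g‖ + (μ + L)·‖g‖·dist(x, M)/σ + (μ + L)·‖g‖·C_M·(dist(x, M)² + σ²)/σ. -/

import Mathlib

open Metric Set Filter
open scoped InnerProductSpace

abbrev Euc (d : ℕ) := EuclideanSpace ℝ (Fin d)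

noncomputable def clarkeSubdiff {d : ℕ} (f : Euc d → ℝ) (x : Euc d) : Set (Euc d) :=
  convexHull ℝ {v | ∃ u : ℕ → Euc d,
    (∀ n, DifferentiableAt ℝ f (u n)) ∧
    Tendsto u atTop (nhds x) ∧
    Tendsto (fun n => gradient f (u n)) atTop (nhds v)}

noncomputable def goldsteinSubdiff {d : ℕ} (f : Euc d → ℝ) (σ : ℝ) (x : Euc d) : Set (Euc d) :=
  convexHull ℝ (⋃ y ∈ closedBall x σ, clarkeSubdiff f y)

theorem stmt5 {d : ℕ}
    (f : Euc d → ℝ) (hf : LocallyLipschitz f)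
    (xbar : Euc d) (M : Set (Euc d)) (hxbarM : xbar ∈ M)
    (δA L μ CM : ℝ)
    (hδA : 0 < δA) (hL : 0 < L) (hμ : 0 < μ) (hCM : 0 < CM)
    (P : Euc d → Euc d)
    (hP : ∀ z ∈ ball xbar (2*δA), P z ∈ M ∧ ‖z - P z‖ = Metric.infDist z M)
    (Tsp : Euc d → Submodule ℝ (Euc d)) (Q : Euc d → Euc d → Euc d)
    (hQ : ∀ x ∈ ball xbar δA, ∀ v, Q x v = ((Tsp x).orthogonalProjectionOnto v : Euc d))
    (H1 : ∀ x' ∈ ball xbar (2*δA), ∀ v ∈ clarkeSubdiff f x', ‖v‖ ≤ L)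
    (H2 : ∀ x' ∈ ball xbar δA, ∀ v ∈ clarkeSubdiff f x',
      μ * Metric.infDist x' M ≤ ⟪ v, x' - P x' ⟫_ℝ)
    (H3 : ∀ x ∈ ball xbar δA, ∀ x' ∈ ball xbar (2*δA),
      ‖P x' - P x - Q x (x' - x)‖ ≤ CM * (Metric.infDist x M ^ 2 + ‖x - x'‖ ^ 2))
    (x : Euc d) (hx : x ∈ ball xbar (δA/2)) (σ : ℝ) (hσ0 : 0 < σ) (hσ : σ ≤ δA/2)
    (g : Euc d) (hg : g ∈ goldsteinSubdiff f σ x) (hgne : g ≠ 0)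
    (ghat : Euc d) (hghat : ghat ∈ clarkeSubdiff f (x - (σ/‖g‖) • g)) :
    ⟪ ghat - Q x ghat, g ⟫_ℝ ≤ -(μ * ‖g - Q x g‖)
      + (μ + L) * ‖g‖ * Metric.infDist x M / σ
      + (μ + L) * ‖g‖ * CM * (Metric.infDist x M ^ 2 + σ^2) / σ := by
  have hgnorm : (0:ℝ) < ‖g‖ := norm_pos_iff.mpr hgne
  set c : ℝ := σ / ‖g‖ with hc
  have hcpos : 0 < c := div_pos hσ0 hgnorm
  set xh : Euc d := x - c • g with hxh
  have hdxxh : ‖x - xh‖ = σ := by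
    rw [hxh, sub_sub_cancel, norm_smul, Real.norm_eq_abs, abs_of_pos hcpos, hc,
      div_mul_cancel₀ _ hgnorm.ne']
  have hxball : dist x xbar < δA/2 := mem_ball.mp hx
  have hxA : x ∈ ball xbar δA := mem_ball.mpr (by linarith)
  have hx2A : x ∈ ball xbar (2*δA) := mem_ball.mpr (by linarith)
  have hxhA : xh ∈ ball xbar δA := by
    rw [mem_ball]
    calc dist xh xbar ≤ dist xh x + dist x xbar := dist_triangle _ _ _
      _ < σ + δA/2 := by
          rw [dist_eq_norm, norm_sub_rev, hdxxh]; linarith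
      _ ≤ δA := by linarith
  have hxh2A : xh ∈ ball xbar (2*δA) := by
    rw [mem_ball] at hxhA ⊢; linarith
  obtain ⟨hPxM, hPxn⟩ := hP x hx2A
  obtain ⟨hPxhM, hPxhn⟩ := hP xh hxh2A
  set D : ℝ := Metric.infDist x M with hD
  set D' : ℝ := Metric.infDist xh M with hD'
  have hDnn : 0 ≤ D := Metric.infDist_nonneg
  have hD'nn : 0 ≤ D' := Metric.infDist_nonneg
  have hLg : ‖ghat‖ ≤ L := H1 xh hxh2A ghat hghat
  have haim : μ * D' ≤ ⟪ghat, xh - P xh⟫_ℝ := H2 xh hxhA ghat hghat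
  set E : Euc d := P xh - P x - Q x (xh - x) with hE
  have hEb : ‖E‖ ≤ CM * (D ^ 2 + σ ^ 2) := by
    have := H3 x hxA xh hxh2A
    rwa [hdxxh] at this
  have hEnn : (0:ℝ) ≤ ‖E‖ := norm_nonneg _
  have hQx : ∀ v, Q x v = ((Tsp x).orthogonalProjectionOnto v : Euc d) := hQ x hxA
  -- self-adjointness
  have hsa : ⟪Q x ghat, g⟫_ℝ = ⟪ghat, Q x g⟫_ℝ := by
    rw [hQx, hQx]
    exact Submodule.inner_starProjection_left_eq_right (Tsp x) ghat g
  have hlhs : ⟪ghat - Q x ghat, g⟫_ℝ = ⟪ghat, g - Q x g⟫_ℝ := by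
    rw [inner_sub_left, inner_sub_right, hsa]
  -- linearity of Q x
  have hQlin : Q x (xh - x) = -(c • Q x g) := by
    have h1 : xh - x = -(c • g) := by rw [hxh]; abel
    rw [h1, hQx, hQx, map_neg, map_smul]
    push_cast
    ring_nf
  -- key identity
  have hid : c • (g - Q x g) = (x - P x) - (xh - P xh) - E := by
    rw [hE, hQlin, hxh, smul_sub]
    abel
  -- inner product bound
  have hinner : c * ⟪ghat, g - Q x g⟫_ℝ
      ≤ L * D - μ * D' + L * ‖E‖ := by
    have h1 : c * ⟪ghat, g - Q x g⟫_ℝ = ⟪ghat, c • (g - Q x g)⟫_ℝ := by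
      rw [real_inner_smul_right]
    rw [h1, hid, inner_sub_right, inner_sub_right]
    have b1 : ⟪ghat, x - P x⟫_ℝ ≤ L * D := by
      calc ⟪ghat, x - P x⟫_ℝ ≤ ‖ghat‖ * ‖x - P x‖ := real_inner_le_norm _ _
        _ = ‖ghat‖ * D := by rw [hPxn]
        _ ≤ L * D := mul_le_mul_of_nonneg_right hLg hDnn
    have b3 : -⟪ghat, E⟫_ℝ ≤ L * ‖E‖ := by
      have := abs_real_inner_le_norm ghat E
      have h2 : ‖ghat‖ * ‖E‖ ≤ L * ‖E‖ := mul_le_mul_of_nonneg_right hLg hEnn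
      have h3 := neg_le_of_abs_le this
      linarith
    linarith
  -- norm bound
  have hnb : c * ‖g - Q x g‖ ≤ D + D' + ‖E‖ := by
    have h1 : c * ‖g - Q x g‖ = ‖c • (g - Q x g)‖ := by
      rw [norm_smul, Real.norm_eq_abs, abs_of_pos hcpos]
    rw [h1, hid]
    calc ‖(x - P x) - (xh - P xh) - E‖
        ≤ ‖(x - P x) - (xh - P xh)‖ + ‖E‖ := norm_sub_le _ _
      _ ≤ ‖x - P x‖ + ‖xh - P xh‖ + ‖E‖ := by
          have := norm_sub_le (x - P x) (xh - P xh); linarith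
      _ = D + D' + ‖E‖ := by rw [hPxn, hPxhn]
  set N : ℝ := ‖g - Q x g‖ with hN
  have hNnn : 0 ≤ N := norm_nonneg _
  -- combine
  have hcomb : c * ⟪ghat, g - Q x g⟫_ℝ
      ≤ (L + μ) * D + (L + μ) * (CM * (D ^ 2 + σ ^ 2)) - μ * (c * N) := by
    have hμD' : -(μ * D') ≤ -(μ * (c * N)) + μ * D + μ * ‖E‖ := by
      have := mul_le_mul_of_nonneg_left hnb hμ.le
      linarith
    have h4 := mul_le_mul_of_nonneg_left hEb (by linarith : (0:ℝ) ≤ L + μ)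
    linarith
  have hfin : ⟪ghat, g - Q x g⟫_ℝ
      ≤ ((L + μ) * D + (L + μ) * (CM * (D ^ 2 + σ ^ 2)) - μ * (c * N)) / c := by
    rw [le_div_iff₀ hcpos]
    linarith [hcomb]
  rw [hlhs]
  refine hfin.trans (le_of_eq ?_)
  rw [hc]
  field_simp
  ring
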